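/- arXiv:1704.08592 — 2 statements merged into one kernel-verified Lean document; each statement's English description precedes it below -/
import Mathlib

section
/- For all s, t, v ∈ V with v ∉ {s, t}, the number of shortest s-t paths through v decomposes over the successor edges of v: σ_{st}(v) = Σ_{w : v ∈ P_s(w)} σ_{st}(v,w), where σ_{st}(v,w) denotes the number of shortest s-t paths in G that use the edge (v,w). -/
open scoped BigOperators

/-- A directed graph on vertex set `V` with positive real edge weights. -/
structure WDigraph (V : Type*) where
  /-- the edge relation -/
  E : V → V → Prop
  /-- the edge weights -/
  w : V → V → ℝ
  /-- weights of edges are positive -/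
  pos : ∀ a b, E a b → 0 < w a b

namespace WDigraph

variable {V : Type*} [Fintype V] [DecidableEq V]

/-- `p` is a simple path from `s` to `t` in `G`: a nonempty list of pairwise
distinct vertices starting at `s`, ending at `t`, consecutive vertices joined
by edges. (Since all weights are positive, every shortest path is simple, so
it suffices to consider simple paths throughout.) -/
def IsPath (G : WDigraph V) (s t : V) (p : List V) : Prop :=
  List.Chain' G.E p ∧ p.head? = some s ∧ p.getLast? = some t ∧ p.Nodup

/-- The total weight of a list of vertices (sum of the weights of consecutive pairs). -/
def pw (G : WDigraph V) : List V → ℝ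
  | [] => 0
  | [_] => 0
  | a :: b :: r => G.w a b + G.pw (b :: r)

/-- `d(s,t)`: shortest-path distance from `s` to `t`, equal to `⊤` (infinity)
if `t` is unreachable from `s`. -/
noncomputable def dist (G : WDigraph V) (s t : V) : EReal :=
  sInf ((fun p => (G.pw p : EReal)) '' {p | G.IsPath s t p})

/-- The set of shortest `s`-`t` paths in `G`. -/
def SP (G : WDigraph V) (s t : V) : Set (List V) :=
  {p | G.IsPath s t p ∧ (G.pw p : EReal) = G.dist s t}

/-- `σ_{st}`: the number of shortest `s`-`t` paths in `G`. -/
noncomputable def sigma (G : WDigraph V) (s t : V) : ℕ :=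
  (G.SP s t).ncard

/-- `σ_{st}(v)`: the number of shortest `s`-`t` paths in `G` that contain `v`. -/
noncomputable def sigmaV (G : WDigraph V) (s t v : V) : ℕ :=
  {p ∈ G.SP s t | v ∈ p}.ncard

/-- `σ_{st}(v,w)`: the number of shortest `s`-`t` paths in `G` using the edge `(v,w)`. -/
noncomputable def sigmaE (G : WDigraph V) (s t v w : V) : ℕ :=
  {p ∈ G.SP s t | [v, w] <:+: p}.ncard

/-- `P_s(t)`: the set of predecessors of `t` with respect to source `s`:
nodes `y` with `(y,t) ∈ E` and `d(s,y) + ω(y,t) = d(s,t) < ∞`. -/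
def pred (G : WDigraph V) (s t : V) : Set V :=
  {y | G.E y t ∧ G.dist s y + (G.w y t : EReal) = G.dist s t ∧ G.dist s t < ⊤}

/-- `δ_{s•}(v)`: Brandes's one-sided dependency of `s` on `v`
(a summand is `0` whenever its denominator is `0`, which is automatic since
in Lean division by zero yields zero). -/
noncomputable def delta (G : WDigraph V) (s v : V) : ℝ :=
  ∑ᶠ t ∈ {t : V | t ≠ s ∧ t ≠ v}, (G.sigmaV s t v : ℝ) / (G.sigma s t : ℝ)

/-- `c_B(v)`: the betweenness centrality of `v`. -/
noncomputable def bc (G : WDigraph V) (v : V) : ℝ :=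
  ∑ᶠ s ∈ {s : V | s ≠ v}, G.delta s v

/-- `G'` is obtained from `G` by the incremental update `(u, v, ω'(u,v))`:
either a new edge `(u,v) ∉ E` is inserted with positive weight, or the weight
of the existing edge `(u,v)` is decreased; all other edges and weights are
unchanged. (Positivity of all weights is part of the `WDigraph` structure.) -/
structure IsUpdate (G G' : WDigraph V) (u v : V) : Prop where
  /-- the updated edge is present in `G'` -/
  edge' : G'.E u v
  /-- `E' = E ∪ {(u,v)}` -/
  edge_iff : ∀ a b, G'.E a b ↔ G.E a b ∨ a = u ∧ b = v
  /-- `ω'` agrees with `ω` on all edges other than `(u,v)` -/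
  weight_eq : ∀ a b, ¬(a = u ∧ b = v) → G'.w a b = G.w a b
  /-- either an insertion of a new edge, or a weight decrease of an existing one -/
  insert_or_decrease : ¬ G.E u v ∨ (G.E u v ∧ G'.w u v < G.w u v)

/-- `S(t)`: the affected sources of `t`. -/
def affS (G G' : WDigraph V) (t : V) : Set V :=
  {s | G.dist s t > G'.dist s t ∨ G.sigma s t ≠ G'.sigma s t}

/-- `T(s)`: the affected targets of `s`. -/
def affT (G G' : WDigraph V) (s : V) : Set V :=
  {t | G.dist s t > G'.dist s t ∨ G.sigma s t ≠ G'.sigma s t}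

/-- `Δ_{s•}(v) = Σ_{t ∈ T(s), t ≠ v} σ_{st}(v)/σ_{st}`, computed in `G`
(`0`-convention for zero denominators). -/
noncomputable def Delta (G G' : WDigraph V) (s v : V) : ℝ :=
  ∑ᶠ t ∈ {t : V | t ∈ affT G G' s ∧ t ≠ v}, (G.sigmaV s t v : ℝ) / (G.sigma s t : ℝ)

/-- `Δ'_{s•}(v) = Σ_{t ∈ T(s), t ≠ v} σ'_{st}(v)/σ'_{st}`, computed in `G'`
(`0`-convention for zero denominators). -/
noncomputable def Delta' (G G' : WDigraph V) (s v : V) : ℝ :=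
  ∑ᶠ t ∈ {t : V | t ∈ affT G G' s ∧ t ≠ v}, (G'.sigmaV s t v : ℝ) / (G'.sigma s t : ℝ)


/-! ### Auxiliary lemmas -/

lemma pw_split (G : WDigraph V) : ∀ (xs : List V) (v : V) (ys : List V),
    G.pw (xs ++ v :: ys) = G.pw (xs ++ [v]) + G.pw (v :: ys)
  | [], v, ys => by simp [pw]
  | [a], v, ys => by simp [pw]
  | a :: b :: xs, v, ys => by
    have h := pw_split G (b :: xs) v ys
    simp only [List.cons_append, pw, List.append_eq] at h ⊢
    rw [h]; ring

lemma pw_nonneg (G : WDigraph V) : ∀ {p : List V}, List.Chain' G.E p → 0 ≤ G.pw p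
  | [], _ => le_refl 0
  | [_], _ => le_refl 0
  | a :: b :: r, h => by
    have h1 : G.E a b := (List.isChain_cons_cons.mp h).1
    have h2 := pw_nonneg G (List.isChain_cons_cons.mp h).2
    simpa only [pw] using add_nonneg (G.pos a b h1).le h2

lemma head?_eq_head? (l₁ : List V) (a : V) (l₂ l₃ : List V) :
    (l₁ ++ a :: l₂).head? = (l₁ ++ a :: l₃).head? := by
  cases l₁ <;> simp

lemma head?_append_left {l₁ : List V} (l₂ : List V) {a : V} (h : l₁.head? = some a) :
    (l₁ ++ l₂).head? = some a := by
  cases l₁ <;> simp_all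

lemma exists_split_of_not_nodup : ∀ {l : List V}, ¬ l.Nodup →
    ∃ (l₁ : List V) (a : V) (l₂ l₃ : List V), l = l₁ ++ a :: (l₂ ++ a :: l₃)
  | [], h => absurd List.nodup_nil h
  | b :: r, h => by
    by_cases hb : b ∈ r
    · obtain ⟨l₂, l₃, rfl⟩ := List.append_of_mem hb
      exact ⟨[], b, l₂, l₃, rfl⟩
    · have hr : ¬ r.Nodup := fun hn => h (List.nodup_cons.mpr ⟨hb, hn⟩)
      obtain ⟨l₁, a, l₂, l₃, rfl⟩ := exists_split_of_not_nodup hr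
      exact ⟨b :: l₁, a, l₂, l₃, rfl⟩

lemma exists_path_le_of_walk (G : WDigraph V) (s t : V) :
    ∀ (p : List V), List.Chain' G.E p → p.head? = some s → p.getLast? = some t →
      ∃ q, G.IsPath s t q ∧ G.pw q ≤ G.pw p := by
  have H : ∀ (n : ℕ) (p : List V), p.length ≤ n → List.Chain' G.E p →
      p.head? = some s → p.getLast? = some t →
      ∃ q, G.IsPath s t q ∧ G.pw q ≤ G.pw p := by
    intro n
    induction n with
    | zero =>
      intro p hlen hc hh hl
      rw [Nat.le_zero, List.length_eq_zero_iff] at hlen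
      simp [hlen] at hh
    | succ n ih =>
      intro p hlen hc hh hl
      by_cases hnd : p.Nodup
      · exact ⟨p, ⟨hc, hh, hl, hnd⟩, le_refl _⟩
      · obtain ⟨l₁, a, l₂, l₃, rfl⟩ := exists_split_of_not_nodup hnd
        have hlen' : (l₁ ++ a :: l₃).length ≤ n := by
          simp only [List.length_append, List.length_cons] at hlen ⊢; omega
        have hc0 := List.isChain_append.mp hc
        have hc' : List.Chain' G.E (l₁ ++ a :: l₃) := by
          refine List.isChain_append.mpr ?_
          refine ⟨hc0.1, hc0.2.1.suffix ⟨a :: l₂, by simp⟩, ?_⟩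
          intro x hx y hy
          exact hc0.2.2 x hx y (by simpa using hy)
        have hh' : (l₁ ++ a :: l₃).head? = some s := by
          rw [head?_eq_head? l₁ a l₃ (l₂ ++ a :: l₃)]; exact hh
        have hl' : (l₁ ++ a :: l₃).getLast? = some t := by
          rw [List.getLast?_append_cons] at hl ⊢
          rw [show (a :: (l₂ ++ a :: l₃) : List V) = (a :: l₂) ++ a :: l₃ by simp,
            List.getLast?_append_cons] at hl
          exact hl
        obtain ⟨q, hq, hle⟩ := ih (l₁ ++ a :: l₃) hlen' hc' hh' hl'
        refine ⟨q, hq, hle.trans ?_⟩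
        have e1 : G.pw (l₁ ++ a :: l₃) = G.pw (l₁ ++ [a]) + G.pw (a :: l₃) :=
          G.pw_split l₁ a l₃
        have e2 : G.pw (l₁ ++ a :: (l₂ ++ a :: l₃)) =
            G.pw (l₁ ++ [a]) + (G.pw ((a :: l₂) ++ [a]) + G.pw (a :: l₃)) := by
          rw [G.pw_split l₁ a (l₂ ++ a :: l₃),
            show (a :: (l₂ ++ a :: l₃) : List V) = (a :: l₂) ++ a :: l₃ by simp,
            G.pw_split (a :: l₂) a l₃]
        have hmid : 0 ≤ G.pw ((a :: l₂) ++ [a]) :=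
          G.pw_nonneg (hc.infix ⟨l₁, l₃, by simp⟩)
        rw [e1, e2]; linarith
  intro p; exact H p.length p le_rfl

lemma dist_le_pw (G : WDigraph V) {s t : V} {p : List V} (h : G.IsPath s t p) :
    G.dist s t ≤ (G.pw p : EReal) :=
  sInf_le ⟨p, h, rfl⟩

lemma dist_le_walk (G : WDigraph V) {s t : V} {p : List V} (hc : List.Chain' G.E p)
    (hh : p.head? = some s) (hl : p.getLast? = some t) :
    G.dist s t ≤ (G.pw p : EReal) := by
  obtain ⟨q, hq, hle⟩ := G.exists_path_le_of_walk s t p hc hh hl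
  exact (G.dist_le_pw hq).trans (EReal.coe_le_coe_iff.mpr hle)

/-- A prefix of a shortest path is itself shortest: its weight is the distance. -/
lemma pw_prefix_eq_dist (G : WDigraph V) {s t y : V} {P B : List V}
    (hp : (P ++ B) ∈ G.SP s t) (hy : P.getLast? = some y) :
    (G.pw P : EReal) = G.dist s y := by
  obtain ⟨⟨hc, hh, hl, hnd⟩, hdist⟩ := hp
  obtain ⟨P', rfl⟩ := List.getLast?_eq_some_iff.mp hy
  have hcP := List.isChain_append.mp hc
  have hPh : (P' ++ [y]).head? = some s := by
    rw [show ((P' ++ [y]) ++ B : List V) = P' ++ y :: B by simp] at hh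
    rw [show (P' ++ [y] : List V) = P' ++ y :: ([] : List V) from rfl,
      head?_eq_head? P' y [] B]
    exact hh
  have hPpath : G.IsPath s y (P' ++ [y]) :=
    ⟨hc.prefix (List.prefix_append _ _), hPh, List.getLast?_concat, hnd.of_append_left⟩
  have hle : G.dist s y ≤ (G.pw (P' ++ [y]) : EReal) := G.dist_le_pw hPpath
  refine le_antisymm (not_lt.mp fun hlt => ?_) hle
  rw [dist] at hlt
  obtain ⟨e, ⟨q, hq, rfl⟩, hqlt⟩ := sInf_lt_iff.mp hlt
  have hqlt' : G.pw q < G.pw (P' ++ [y]) := EReal.coe_lt_coe_iff.mp hqlt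
  obtain ⟨q', rfl⟩ := List.getLast?_eq_some_iff.mp hq.2.2.1
  -- the walk (q' ++ [y]) ++ B
  have hcW : List.Chain' G.E ((q' ++ [y]) ++ B) := by
    refine List.isChain_append.mpr ?_
    refine ⟨hq.1, hc.suffix ⟨P' ++ [y], rfl⟩, ?_⟩
    intro a ha b hb
    refine hcP.2.2 a ?_ b hb
    rw [List.getLast?_concat] at ha ⊢
    exact ha
  have hhW : ((q' ++ [y]) ++ B).head? = some s :=
    head?_append_left B hq.2.1
  have hlW : ((q' ++ [y]) ++ B).getLast? = some t := by
    cases B with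
    | nil =>
      rw [List.append_nil] at hl ⊢
      rw [List.getLast?_concat] at hl ⊢
      exact hl
    | cons c B' =>
      rw [List.getLast?_append_cons] at hl ⊢
      exact hl
  have hWle : G.dist s t ≤ (G.pw ((q' ++ [y]) ++ B) : EReal) :=
    G.dist_le_walk hcW hhW hlW
  have epw : G.pw ((q' ++ [y]) ++ B) < G.pw ((P' ++ [y]) ++ B) := by
    rw [show ((q' ++ [y]) ++ B : List V) = q' ++ y :: B by simp,
      show ((P' ++ [y]) ++ B : List V) = P' ++ y :: B by simp,
      G.pw_split q' y B, G.pw_split P' y B]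
    linarith
  have : G.dist s t < G.dist s t := by
    calc G.dist s t ≤ _ := hWle
      _ < (G.pw ((P' ++ [y]) ++ B) : EReal) := EReal.coe_lt_coe_iff.mpr epw
      _ = G.dist s t := hdist
  exact lt_irrefl _ this

/-- On a `Nodup` list the successor of `x` is unique. -/
lemma succ_unique {p : List V} (hnd : p.Nodup) {x w w' : V}
    (h1 : [x, w] <:+: p) (h2 : [x, w'] <:+: p) : w = w' := by
  obtain ⟨l, r, rfl⟩ := h1
  obtain ⟨l', r', he⟩ := h2
  have hnd1 : (l ++ x :: w :: r).Nodup := by simpa using hnd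
  have he' : l' ++ x :: w' :: r' = l ++ x :: w :: r := by simpa using he
  have hnd2 : (l' ++ x :: w' :: r').Nodup := by rw [he']; exact hnd1
  have hx : x ∉ l := fun hm =>
    (List.nodup_append'.mp hnd1).2.2 hm List.mem_cons_self
  have hx' : x ∉ l' := fun hm =>
    (List.nodup_append'.mp hnd2).2.2 hm List.mem_cons_self
  have i1 : (l ++ x :: w :: r).idxOf x = l.length := by
    rw [List.idxOf_append_of_notMem hx]; simp
  have i2 : (l' ++ x :: w' :: r').idxOf x = l'.length := by
    rw [List.idxOf_append_of_notMem hx']; simp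
  rw [he'] at i2
  have hlen : l'.length = l.length := by rw [← i1, ← i2]
  obtain ⟨-, e2⟩ := List.append_inj he' hlen
  injection e2 with _ e3
  injection e3 with e4 _
  exact e4.symm

/-- For all `s, t, x ∈ V` with `x ∉ {s, t}`, the number of shortest
`s`-`t` paths through `x` decomposes over the successor edges of `x`:
`σ_{st}(x) = Σ_{w : x ∈ P_s(w)} σ_{st}(x,w)`. -/
theorem sigmaV_eq_sum_sigmaE (G : WDigraph V) (s t x : V)
    (hxs : x ≠ s) (hxt : x ≠ t) :
    G.sigmaV s t x = ∑ᶠ w ∈ {w : V | x ∈ G.pred s w}, G.sigmaE s t x w := by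
  classical
  have hSP : (G.SP s t).Finite :=
    Set.Finite.subset (List.finite_length_le (α := V) (Fintype.card V))
      (fun p hp => hp.1.2.2.2.length_le_card)
  have hsv : ({p ∈ G.SP s t | x ∈ p}).Finite := hSP.subset (Set.sep_subset _ _)
  have hse : ∀ w, ({p ∈ G.SP s t | [x, w] <:+: p}).Finite :=
    fun w => hSP.subset (Set.sep_subset _ _)
  -- every shortest path through x has a unique successor w with x ∈ pred s w
  have cover : ∀ p ∈ G.SP s t, x ∈ p → ∃ w, x ∈ G.pred s w ∧ [x, w] <:+: p := by
    intro p hp hxp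
    obtain ⟨l, r, rfl⟩ := List.append_of_mem hxp
    cases r with
    | nil =>
      exfalso
      have := hp.1.2.2.1
      rw [show (l ++ [x] : List V) = l ++ [x] from rfl, List.getLast?_concat] at this
      exact hxt (Option.some_inj.mp this)
    | cons w B =>
      have hinf : [x, w] <:+: l ++ x :: w :: B := ⟨l, B, by simp⟩
      have h1 : (G.pw (l ++ [x]) : EReal) = G.dist s x := by
        refine G.pw_prefix_eq_dist (t := t) (P := l ++ [x]) (B := w :: B) ?_ List.getLast?_concat
        rw [show ((l ++ [x]) ++ w :: B : List V) = l ++ x :: w :: B by simp]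
        exact hp
      have h2 : (G.pw (l ++ [x, w]) : EReal) = G.dist s w := by
        refine G.pw_prefix_eq_dist (t := t) (P := l ++ [x, w]) (B := B) ?_ ?_
        · rw [show ((l ++ [x, w]) ++ B : List V) = l ++ x :: w :: B by simp]
          exact hp
        · rw [show (l ++ [x, w] : List V) = (l ++ [x]) ++ [w] by simp]
          exact List.getLast?_concat
      have hExw : G.E x w := by
        have := hp.1.1.infix hinf
        exact List.isChain_pair.mp this
      have hpweq : G.pw (l ++ [x, w]) = G.pw (l ++ [x]) + G.w x w := by
        rw [show (l ++ [x, w] : List V) = l ++ x :: [w] from rfl, G.pw_split l x [w]]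
        simp [pw]
      refine ⟨w, ⟨hExw, ?_, ?_⟩, hinf⟩
      · rw [← h1, ← h2, hpweq, EReal.coe_add]
      · rw [← h2]; exact EReal.coe_lt_top _
  set T : Finset V := (Set.toFinite {w | x ∈ G.pred s w}).toFinset with hT
  have hTmem : ∀ w, w ∈ T ↔ x ∈ G.pred s w := by
    intro w; simp [hT, Set.Finite.mem_toFinset]
  have hrhs : ∑ᶠ w ∈ {w : V | x ∈ G.pred s w}, G.sigmaE s t x w
      = ∑ w ∈ T, G.sigmaE s t x w := by
    rw [show {w : V | x ∈ G.pred s w} = (T : Set V) by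
      ext w; simp [hT, Set.Finite.mem_toFinset]]
    exact finsum_mem_coe_finset _ _
  have hkey : hsv.toFinset = T.biUnion (fun w => (hse w).toFinset) := by
    ext p
    simp only [Set.Finite.mem_toFinset, Finset.mem_biUnion, Set.mem_setOf_eq]
    constructor
    · rintro ⟨hp, hxp⟩
      obtain ⟨w, hw, hinf⟩ := cover p hp hxp
      exact ⟨w, (hTmem w).mpr hw, hp, hinf⟩
    · rintro ⟨w, _, hp, hinf⟩
      exact ⟨hp, hinf.subset (by simp)⟩
  have hdisj : ∀ w ∈ T, ∀ w' ∈ T, w ≠ w' →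
      Disjoint ((hse w).toFinset) ((hse w').toFinset) := by
    intro w _ w' _ hww'
    rw [Finset.disjoint_left]
    intro p hp hp'
    rw [Set.Finite.mem_toFinset] at hp hp'
    exact hww' (succ_unique hp.1.1.2.2.2 hp.2 hp'.2)
  rw [hrhs]
  have hlhs : G.sigmaV s t x = hsv.toFinset.card := Set.ncard_eq_toFinset_card _ hsv
  rw [hlhs, hkey, Finset.card_biUnion hdisj]
  refine Finset.sum_congr rfl fun w _ => ?_
  exact (Set.ncard_eq_toFinset_card _ (hse w)).symm

end WDigraph
end

section
/- For every s, v ∈ V with v ≠ s, the dependency after the update satisfies δ'_{s•}(v) = δ_{s•}(v) − Δ_{s•}(v) + Δ'_{s•}(v). -/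
open scoped BigOperators

namespace WDigraph

variable {V : Type*} [Fintype V] [DecidableEq V]

private lemma paths_finite (G : WDigraph V) (s t : V) : {p | G.IsPath s t p}.Finite := by
  have h : {p : List V | p.Nodup}.Finite := by
    haveI : Fintype {l : List V // l.Nodup} := fintypeNodupList
    exact Set.Finite.subset (Set.finite_range (Subtype.val : {l : List V // l.Nodup} → _))
      (fun p hp => ⟨⟨p, hp⟩, rfl⟩)
  exact h.subset fun p hp => hp.2.2.2

private lemma SP_finite (G : WDigraph V) (s t : V) : (G.SP s t).Finite :=
  (paths_finite G s t).subset fun p hp => hp.1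

private lemma dist_le' (G : WDigraph V) (s t : V) (p : List V) (hp : G.IsPath s t p) :
    G.dist s t ≤ (G.pw p : EReal) := sInf_le ⟨p, hp, rfl⟩

private lemma SP_nonempty' (G : WDigraph V) (s t : V) (hne : {p | G.IsPath s t p}.Nonempty) :
    (G.SP s t).Nonempty := by
  have hfin := (paths_finite G s t).image (fun p => (G.pw p : EReal))
  have hmem := (hne.image (fun p => (G.pw p : EReal))).csInf_mem hfin
  obtain ⟨p, hp, hpw⟩ := hmem
  exact ⟨p, hp, hpw⟩

private lemma pw_congr (G G' : WDigraph V) :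
    ∀ p : List V, (∀ a b, [a, b] <:+: p → G'.w a b = G.w a b) → G'.pw p = G.pw p
  | [] , _ => rfl
  | [_], _ => rfl
  | a :: b :: r, h => by
    have h1 : [a, b] <:+: a :: b :: r := ⟨[], r, rfl⟩
    rw [pw, pw, h a b h1,
      pw_congr G G' (b :: r) (fun a' b' hab => h a' b' (List.infix_cons hab))]

private lemma pw_le (G G' : WDigraph V) (hle : ∀ a b, G'.w a b ≤ G.w a b) :
    ∀ p : List V, G'.pw p ≤ G.pw p
  | [] => le_refl _
  | [_] => le_refl _
  | a :: b :: r => by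
    rw [pw, pw]
    exact add_le_add (hle a b) (pw_le G G' hle (b :: r))

private lemma pw_lt (G G' : WDigraph V) (u v : V) (hle : ∀ a b, G'.w a b ≤ G.w a b)
    (hlt : G'.w u v < G.w u v) :
    ∀ p : List V, [u, v] <:+: p → G'.pw p < G.pw p
  | [], hin => absurd hin.length_le (by simp)
  | [_], hin => absurd hin.length_le (by simp)
  | a :: b :: r, hin => by
    rw [pw, pw]
    rcases List.infix_cons_iff.1 hin with hpre | hinf
    · obtain ⟨rfl, hpre'⟩ := List.cons_prefix_cons.1 hpre
      obtain ⟨rfl, _⟩ := List.cons_prefix_cons.1 hpre'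
      exact add_lt_add_of_lt_of_le hlt (pw_le G G' hle _)
    · exact add_lt_add_of_le_of_lt (hle a b) (pw_lt G G' u v hle hlt (b :: r) hinf)

private lemma isPath_self (G : WDigraph V) (s : V) (p : List V) : G.IsPath s s p ↔ p = [s] := by
  constructor
  · rintro ⟨hc, hh, hl, hn⟩
    cases p with
    | nil => simp at hh
    | cons a r =>
      have ha : a = s := by simpa using hh
      subst ha
      cases r with
      | nil => rfl
      | cons b r' =>
        exfalso
        have hne : b :: r' ≠ [] := by simp
        have h1 : (a :: b :: r').getLast (by simp) = a := by
          rw [List.getLast?_eq_getLast (by simp)] at hl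
          exact Option.some_injective _ hl
        rw [List.getLast_cons hne] at h1
        have h2 : a ∈ b :: r' := h1 ▸ List.getLast_mem hne
        exact (List.nodup_cons.1 hn).1 h2
  · rintro rfl
    exact ⟨List.isChain_singleton s, rfl, rfl, List.nodup_singleton s⟩

private lemma paths_self (G : WDigraph V) (s : V) : {p | G.IsPath s s p} = {[s]} := by
  ext p; simpa using isPath_self G s p

private lemma dist_self (G : WDigraph V) (s : V) : G.dist s s = 0 := by
  rw [dist, paths_self, Set.image_singleton]
  simp [pw]

private lemma SP_self (G : WDigraph V) (s : V) : G.SP s s = {[s]} := by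
  ext p
  constructor
  · rintro ⟨hp, _⟩
    exact (isPath_self G s p).1 hp
  · rintro rfl
    refine ⟨(isPath_self G s _).2 rfl, ?_⟩
    rw [dist_self]; simp [pw]

private lemma sigma_self (G : WDigraph V) (s : V) : G.sigma s s = 1 := by
  rw [sigma, SP_self, Set.ncard_singleton]

private lemma not_self_affT (G G' : WDigraph V) (s : V) : s ∉ affT G G' s := by
  intro hs
  rcases hs with hd | hσ
  · rw [dist_self, dist_self] at hd; exact lt_irrefl _ hd
  · rw [sigma_self, sigma_self] at hσ; exact hσ rfl

private lemma unaffected (G G' : WDigraph V) (u v : V) (h : IsUpdate G G' u v) (s t : V)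
    (ht : t ∉ affT G G' s) : G.SP s t = G'.SP s t := by
  have hd : G.dist s t ≤ G'.dist s t := by
    by_contra hc
    exact ht (Or.inl (lt_of_not_ge hc))
  have hσ : G.sigma s t = G'.sigma s t := by
    by_contra hc
    exact ht (Or.inr hc)
  have hpath : ∀ p, G.IsPath s t p → G'.IsPath s t p := by
    rintro p ⟨hc, h2, h3, h4⟩
    exact ⟨hc.imp (fun a b hab => (h.edge_iff a b).2 (Or.inl hab)), h2, h3, h4⟩
  have hkey : ∀ p ∈ G.SP s t, ¬ [u, v] <:+: p := by
    rintro p ⟨hp, hpw⟩ hin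
    rcases h.insert_or_decrease with hins | ⟨_, hlt⟩
    · exact hins (List.isChain_pair.1 (hp.1.infix hin))
    · have hle : ∀ a b, G'.w a b ≤ G.w a b := by
        intro a b
        by_cases hab : a = u ∧ b = v
        · obtain ⟨rfl, rfl⟩ := hab; exact hlt.le
        · rw [h.weight_eq a b hab]
      have h2 : (G'.pw p : EReal) < (G.pw p : EReal) := by
        exact_mod_cast pw_lt G G' u v hle hlt p hin
      have h3 : G'.dist s t < G.dist s t :=
        lt_of_le_of_lt (dist_le' G' s t p (hpath p hp)) (hpw ▸ h2)
      exact absurd (lt_of_le_of_lt hd h3) (lt_irrefl _)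
  have hpw' : ∀ p ∈ G.SP s t, G'.pw p = G.pw p := by
    intro p hp
    apply pw_congr
    intro a b hab
    by_cases h2 : a = u ∧ b = v
    · obtain ⟨rfl, rfl⟩ := h2; exact absurd hab (hkey p hp)
    · exact h.weight_eq a b h2
  by_cases hne : {p | G.IsPath s t p}.Nonempty
  · obtain ⟨p₀, hp₀⟩ := SP_nonempty' G s t hne
    have hdist : G'.dist s t = G.dist s t := by
      refine le_antisymm ?_ hd
      have h1 := dist_le' G' s t p₀ (hpath p₀ hp₀.1)
      rw [hpw' p₀ hp₀] at h1
      exact hp₀.2 ▸ h1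
    have hsub : G.SP s t ⊆ G'.SP s t := by
      rintro p ⟨hp, hpwp⟩
      refine ⟨hpath p hp, ?_⟩
      have heq : ((G'.pw p : ℝ) : EReal) = ((G.pw p : ℝ) : EReal) := by
        rw [hpw' p ⟨hp, hpwp⟩]
      rw [heq, hpwp, hdist]
    exact Set.eq_of_subset_of_ncard_le hsub (le_of_eq hσ.symm) (SP_finite G' s t)
  · have hempty : {p | G.IsPath s t p} = ∅ := Set.not_nonempty_iff_eq_empty.1 hne
    have hdt : G.dist s t = ⊤ := by rw [dist, hempty, Set.image_empty, sInf_empty]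
    have hdt' : G'.dist s t = ⊤ := top_le_iff.1 (hdt ▸ hd)
    have h1 : G.SP s t = ∅ := by
      rw [Set.eq_empty_iff_forall_notMem]
      rintro p ⟨hp, _⟩
      exact hne ⟨p, hp⟩
    have h2 : G'.SP s t = ∅ := by
      rw [Set.eq_empty_iff_forall_notMem]
      rintro p ⟨_, hpw⟩
      rw [hdt'] at hpw
      exact EReal.coe_ne_top _ hpw
    rw [h1, h2]

/-- For every `s, x ∈ V` with `x ≠ s`, the dependency after the
update satisfies `δ'_{s•}(x) = δ_{s•}(x) − Δ_{s•}(x) + Δ'_{s•}(x)`. -/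
theorem delta'_eq (G G' : WDigraph V) (u v : V)
    (h : IsUpdate G G' u v) (s x : V) (hxs : x ≠ s) :
    G'.delta s x = G.delta s x - Delta G G' s x + Delta' G G' s x := by
  classical
  set f : V → ℝ := fun t => (G.sigmaV s t x : ℝ) / (G.sigma s t : ℝ) with hf
  set f' : V → ℝ := fun t => (G'.sigmaV s t x : ℝ) / (G'.sigma s t : ℝ) with hf'
  set A : Set V := {t | t ≠ s ∧ t ≠ x} with hA
  set T : Set V := affT G G' s with hT
  set B : Set V := {t | t ∈ affT G G' s ∧ t ≠ x} with hB
  have hATB : A ∩ T = B := by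
    ext t
    simp only [hA, hB, hT, Set.mem_inter_iff, Set.mem_setOf_eq]
    constructor
    · rintro ⟨⟨h1, h2⟩, h3⟩; exact ⟨h3, h2⟩
    · rintro ⟨h1, h2⟩
      refine ⟨⟨?_, h2⟩, h1⟩
      rintro rfl
      exact not_self_affT G G' t h1
  have hcongr : ∀ t ∈ A \ T, f' t = f t := by
    intro t ht
    have hSP := unaffected G G' u v h s t ht.2
    have hσ : G.sigma s t = G'.sigma s t := by
      by_contra hc
      exact ht.2 (Or.inr hc)
    have hσV : G.sigmaV s t x = G'.sigmaV s t x := by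
      rw [sigmaV, sigmaV, hSP]
    simp only [hf, hf', hσ, hσV]
  have hsplit : ∀ g : V → ℝ, (∑ᶠ t ∈ A, g t) = (∑ᶠ t ∈ B, g t) + ∑ᶠ t ∈ A \ T, g t := by
    intro g
    rw [← hATB]
    exact (finsum_mem_inter_add_sdiff T (Set.toFinite A)).symm
  have e1 : G'.delta s x = (∑ᶠ t ∈ B, f' t) + ∑ᶠ t ∈ A \ T, f t := by
    rw [delta]
    rw [show {t : V | t ≠ s ∧ t ≠ x} = A from rfl]
    rw [hsplit f', finsum_mem_congr rfl hcongr]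
  have e2 : G.delta s x = (∑ᶠ t ∈ B, f t) + ∑ᶠ t ∈ A \ T, f t := by
    rw [delta]
    rw [show {t : V | t ≠ s ∧ t ≠ x} = A from rfl]
    rw [hsplit f]
  have e3 : Delta G G' s x = ∑ᶠ t ∈ B, f t := rfl
  have e4 : Delta' G G' s x = ∑ᶠ t ∈ B, f' t := rfl
  rw [e1, e2, e3, e4]
  ring


end WDigraph
end
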